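/- Every path P = v₁…vₙ with at least 4 edges admits a proper orientation with maximum in-degree at most 2 such that d⁻(v₁)=0, d⁻(v₂)=2, d⁻(v_{n−1})=2, and d⁻(vₙ)=0. -/

import Mathlib

open SimpleGraph

/-- `D` is an orientation of `G`: each edge gets exactly one direction. -/
def IsOrientation {V : Type*} (G : SimpleGraph V) (D : V → V → Prop) : Prop :=
  (∀ u v, G.Adj u v ↔ (D u v ∨ D v u)) ∧ ∀ u v, ¬(D u v ∧ D v u)

/-- In-degree of `v` in the orientation `D`. -/
noncomputable def inDeg {V : Type*} (D : V → V → Prop) (v : V) : ℕ :=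
  Nat.card {u : V // D u v}

/-- An orientation is proper if adjacent vertices have distinct in-degrees. -/
def IsProper {V : Type*} (G : SimpleGraph V) (D : V → V → Prop) : Prop :=
  ∀ u v, G.Adj u v → inDeg D u ≠ inDeg D v

/-- Edge `i` (between `v_i` and `v_{i+1}`) is directed rightwards. -/
def Rdir (n i : ℕ) : Prop :=
  (i % 3 = 0 ∧ ¬(n % 3 = 2 ∧ i = n - 2)) ∨ (n % 3 ≠ 0 ∧ i = n - 3)

instance (n i : ℕ) : Decidable (Rdir n i) := by unfold Rdir; infer_instance

/-- The orientation of the path. -/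
def Dir (n : ℕ) (u v : Fin n) : Prop :=
  (u.val + 1 = v.val ∧ Rdir n u.val) ∨ (v.val + 1 = u.val ∧ ¬ Rdir n v.val)

/-- Target in-degree values. -/
def dval (n k : ℕ) : ℕ :=
  (if 1 ≤ k ∧ Rdir n (k - 1) then 1 else 0) +
    (if k + 1 < n ∧ ¬ Rdir n k then 1 else 0)

lemma inDeg_eq_ncard {V : Type*} (D : V → V → Prop) (v : V) :
    inDeg D v = Set.ncard {u | D u v} := rfl

lemma key (n : ℕ) (v : Fin n) : inDeg (Dir n) v = dval n v.val := by
  rw [inDeg_eq_ncard]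
  by_cases h1 : 1 ≤ v.val ∧ Rdir n (v.val - 1) <;>
    by_cases h2 : v.val + 1 < n ∧ ¬ Rdir n v.val
  · have hs : {u | Dir n u v} =
        {(⟨v.val - 1, by omega⟩ : Fin n), ⟨v.val + 1, h2.1⟩} := by
      ext u
      simp only [Set.mem_setOf_eq, Dir, Set.mem_insert_iff, Set.mem_singleton_iff,
        Fin.ext_iff]
      constructor
      · rintro (⟨h, _⟩ | ⟨h, _⟩)
        · left; omega
        · right; omega
      · rintro (h | h)
        · left
          refine ⟨by omega, ?_⟩
          simpa [h] using h1.2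
        · right
          exact ⟨by omega, h2.2⟩
    rw [hs, Set.ncard_pair (Fin.ne_of_val_ne (by simp only [Fin.val_mk]; omega))]
    rw [dval, if_pos h1, if_pos h2]
  · have hs : {u | Dir n u v} = {(⟨v.val - 1, by omega⟩ : Fin n)} := by
      ext u
      simp only [Set.mem_setOf_eq, Dir, Set.mem_singleton_iff, Fin.ext_iff]
      constructor
      · rintro (⟨h, _⟩ | ⟨h, hr⟩)
        · omega
        · exact absurd ⟨by omega, hr⟩ h2
      · intro h
        left
        refine ⟨by omega, ?_⟩
        simpa [h] using h1.2
    rw [hs, Set.ncard_singleton]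
    rw [dval, if_pos h1, if_neg h2]
  · have hs : {u | Dir n u v} = {(⟨v.val + 1, h2.1⟩ : Fin n)} := by
      ext u
      simp only [Set.mem_setOf_eq, Dir, Set.mem_singleton_iff, Fin.ext_iff]
      constructor
      · rintro (⟨h, hr⟩ | ⟨h, _⟩)
        · exact absurd ⟨by omega, by rwa [show v.val - 1 = u.val by omega]⟩ h1
        · omega
      · intro h
        right
        exact ⟨by omega, h2.2⟩
    rw [hs, Set.ncard_singleton]
    rw [dval, if_neg h1, if_pos h2]
  · have hs : {u | Dir n u v} = ∅ := by
      ext u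
      simp only [Set.mem_setOf_eq, Dir, Set.mem_empty_iff_false, iff_false]
      rintro (⟨h, hr⟩ | ⟨h, hr⟩)
      · exact h1 ⟨by omega, by rwa [show v.val - 1 = u.val by omega]⟩
      · exact h2 ⟨by omega, hr⟩
    rw [hs, Set.ncard_empty]
    rw [dval, if_neg h1, if_neg h2]

lemma dval_ne (n k : ℕ) (hn : 5 ≤ n) (hk : k + 1 < n) :
    dval n k ≠ dval n (k + 1) := by
  simp only [dval]
  split_ifs <;> simp only [Rdir] at * <;> omega

/-- Lemma 2: a path with at least 4 edges (`n ≥ 5` vertices). -/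
theorem path_orientation_0_2_2_0 (n : ℕ) (hn : 5 ≤ n) :
    ∃ D : Fin n → Fin n → Prop,
      IsOrientation (SimpleGraph.pathGraph n) D ∧
      IsProper (SimpleGraph.pathGraph n) D ∧
      (∀ v, inDeg D v ≤ 2) ∧
      inDeg D ⟨0, by omega⟩ = 0 ∧ inDeg D ⟨1, by omega⟩ = 2 ∧
      inDeg D ⟨n - 2, by omega⟩ = 2 ∧ inDeg D ⟨n - 1, by omega⟩ = 0 := by
  refine ⟨Dir n, ⟨?_, ?_⟩, ?_, ?_, ?_, ?_, ?_, ?_⟩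
  · intro u v
    rw [pathGraph_adj]
    by_cases hu : Rdir n u.val <;> by_cases hv : Rdir n v.val <;>
      simp only [Dir] <;> tauto
  · rintro u v ⟨⟨h1, ha⟩ | ⟨h1, ha⟩, ⟨h2, hb⟩ | ⟨h2, hb⟩⟩
    · omega
    · exact hb ha
    · exact ha hb
    · omega
  · intro u v hadj
    rw [key, key]
    rcases pathGraph_adj.mp hadj with h | h
    · rw [show v.val = u.val + 1 from h.symm]
      exact dval_ne n u.val hn (h ▸ v.isLt)
    · rw [show u.val = v.val + 1 from h.symm]
      exact (dval_ne n v.val hn (h ▸ u.isLt)).symm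
  · intro v
    rw [key]
    simp only [dval]
    split_ifs <;> omega
  · simp only [key, Fin.val_mk]
    unfold dval Rdir
    split_ifs <;>
      (try simp only [false_and, false_or, true_and, not_false_eq_true, not_true,
        and_true, or_false, and_false, true_or, or_true] at *) <;> omega
  · simp only [key, Fin.val_mk]
    unfold dval Rdir
    split_ifs <;>
      (try simp only [false_and, false_or, true_and, not_false_eq_true, not_true,
        and_true, or_false, and_false, true_or, or_true] at *) <;> omega
  · simp only [key, Fin.val_mk]
    unfold dval Rdir
    split_ifs <;>
      (try simp only [false_and, false_or, true_and, not_false_eq_true, not_true,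
        and_true, or_false, and_false, true_or, or_true] at *) <;> omega
  · simp only [key, Fin.val_mk]
    unfold dval Rdir
    split_ifs <;>
      (try simp only [false_and, false_or, true_and, not_false_eq_true, not_true,
        and_true, or_false, and_false, true_or, or_true] at *) <;> omega
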